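/- For every ψ : H, the map x ↦ ⟪ψ, x⟫ = ∑' i, star (ψ i) * (x i) defines a continuous K-linear functional on H whose operator norm equals ‖ψ‖; precisely, there exists f : H →L[K] K with f x = ∑' i, star (ψ i) * (x i) for all x : H, and ‖f‖ = ‖ψ‖. (This is the isometry 𝒥_H : H → H′ of Proposition 3.38.) -/

import Mathlib

open Filter

noncomputable section

variable (K : Type*) [NontriviallyNormedField K] [IsUltrametricDist K]
  [CompleteSpace K] [StarRing K] [NormedStarGroup K]

/-- The p-adic coordinate Hilbert space: zero-convergent sequences in `K` with sup norm. -/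
abbrev H := ZeroAtInftyContinuousMap ℕ K

/-- The standard basis vectors of `H K`. -/
def e (n : ℕ) : H K where
  toFun := fun m => if m = n then 1 else 0
  continuous_toFun := continuous_of_discreteTopology
  zero_at_infty' := by
    rw [cocompact_eq_atTop]
    refine Filter.Tendsto.congr' ?_ tendsto_const_nhds
    filter_upwards [Filter.eventually_gt_atTop n] with m hm
    simp [Nat.ne_of_gt hm]

/-- The canonical inner product on `H K`: `⟪x, y⟫ = ∑' i, star (x i) * y i`. -/
def inner' (x y : H K) : K := ∑' i, star (x i) * y i

/-- A bounded operator is of trace class if its matrix entries vanish along the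
cofinite filter of `ℕ × ℕ`. -/
def IsTraceClass (T : H K →L[K] H K) : Prop :=
  Tendsto (fun q : ℕ × ℕ => (T (e K q.2)) q.1) Filter.cofinite (nhds 0)


variable {K}

set_option linter.unusedSectionVars false

lemma apply_norm_le (ψ : H K) (i : ℕ) : ‖ψ i‖ ≤ ‖ψ‖ :=
  ψ.toBCF.norm_coe_le_norm i

lemma norm_tsum_le' {f : ℕ → K} {C : ℝ} (hC : 0 ≤ C) (h : ∀ i, ‖f i‖ ≤ C) :
    ‖∑' i, f i‖ ≤ C := by
  by_cases hs : Summable f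
  · refine le_of_tendsto' hs.hasSum.norm ?_
    intro s
    exact IsUltrametricDist.norm_sum_le_of_forall_le_of_nonneg hC fun i _ => h i
  · simp [tsum_eq_zero_of_not_summable hs, hC]

lemma summable_inner (ψ x : H K) : Summable fun i => star (ψ i) * x i := by
  apply NonarchimedeanAddGroup.summable_of_tendsto_cofinite_zero
  rw [Nat.cofinite_eq_atTop]
  have hx := ZeroAtInftyContinuousMapClass.zero_at_infty x
  rw [cocompact_eq_atTop] at hx
  have hle : ∀ i, ‖star (ψ i) * x i‖ ≤ ‖ψ‖ * ‖x i‖ := fun i => by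
    rw [norm_mul, norm_star]
    exact mul_le_mul_of_nonneg_right (apply_norm_le ψ i) (norm_nonneg _)
  exact squeeze_zero_norm hle (by simpa using (hx.norm.const_mul ‖ψ‖))

variable (K)

/-- For every `ψ : H`, `x ↦ ⟪ψ, x⟫` is a continuous linear functional of norm `‖ψ‖`. -/
theorem stmt1 (ψ : H K) :
    ∃ f : H K →L[K] K, (∀ x : H K, f x = ∑' i, star (ψ i) * x i) ∧ ‖f‖ = ‖ψ‖ := by
  set L : H K →ₗ[K] K :=
    { toFun := fun x => ∑' i, star (ψ i) * x i
      map_add' := fun x y => by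
        simp only [ZeroAtInftyContinuousMap.coe_add, Pi.add_apply, mul_add]
        exact Summable.tsum_add (summable_inner ψ x) (summable_inner ψ y)
      map_smul' := fun c x => by
        simp only [ZeroAtInftyContinuousMap.coe_smul, Pi.smul_apply, smul_eq_mul,
          RingHom.id_apply]
        rw [← tsum_mul_left]
        congr 1
        ext i
        ring }
  have hbound : ∀ x : H K, ‖L x‖ ≤ ‖ψ‖ * ‖x‖ := by
    intro x
    refine norm_tsum_le' (mul_nonneg (norm_nonneg _) (norm_nonneg _)) fun i => ?_
    rw [norm_mul, norm_star]
    exact mul_le_mul (apply_norm_le ψ i) (apply_norm_le x i) (norm_nonneg _) (norm_nonneg _)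
  refine ⟨L.mkContinuous ‖ψ‖ hbound, fun x => rfl, le_antisymm
    (L.mkContinuous_norm_le (norm_nonneg ψ) hbound) ?_⟩
  -- lower bound
  have he : ∀ n, ‖(e K n : H K)‖ ≤ 1 := by
    intro n
    refine (BoundedContinuousFunction.norm_le zero_le_one).mpr fun m => ?_
    show ‖if m = n then (1 : K) else 0‖ ≤ 1
    split <;> simp
  have hval : ∀ n, (L.mkContinuous ‖ψ‖ hbound) (e K n) = star (ψ n) := by
    intro n
    show (∑' i, star (ψ i) * (e K n) i) = star (ψ n)
    rw [tsum_eq_single n]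
    · show star (ψ n) * (if n = n then (1:K) else 0) = star (ψ n)
      simp
    · intro i hi
      show star (ψ i) * (if i = n then (1:K) else 0) = 0
      simp [hi]
  have key : ∀ C : ℝ, 0 ≤ C → (∀ n, ‖ψ n‖ ≤ C) → ‖ψ‖ ≤ C := fun C hC h => by
    rw [← ZeroAtInftyContinuousMap.norm_toBCF_eq_norm]
    exact (BoundedContinuousFunction.norm_le hC).mpr h
  refine key _ (ContinuousLinearMap.opNorm_nonneg _) fun n => ?_
  calc ‖ψ n‖ = ‖(L.mkContinuous ‖ψ‖ hbound) (e K n)‖ := by rw [hval n, norm_star]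
    _ ≤ ‖L.mkContinuous ‖ψ‖ hbound‖ * ‖(e K n : H K)‖ :=
        (L.mkContinuous ‖ψ‖ hbound).le_opNorm _
    _ ≤ ‖L.mkContinuous ‖ψ‖ hbound‖ * 1 :=
        mul_le_mul_of_nonneg_left (he n) (ContinuousLinearMap.opNorm_nonneg _)
    _ = _ := mul_one _
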